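/- Let C ⊆ ℝⁿ be closed and Clarke regular, let G : C → S⁺ⁿ be a metric on C, let f : ℝⁿ → ℝⁿ, and suppose sup_{x∈C} ‖f(x)‖_{G(x)} < ∞. Fix γ ≥ sup_{x∈C} ‖f(x)‖_{G(x)}. Then for any T > 0, a map x : [0,T] → C is a Carathéodory solution of the projected dynamical system ẋ = Π^G_C[f(x)](x), x ∈ C, if and only if it is a Carathéodory solution of the differential inclusion ẋ ∈ f(x) − {η ∈ N^G_xC : ‖η‖_{G(x)} ≤ γ}, x ∈ C. -/

import Mathlib

open Metric Set Filter Topology MeasureTheory Pointwise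
open scoped RealInnerProductSpace

noncomputable section

/-- Euclidean space `ℝⁿ`. -/
abbrev Euc (n : ℕ) := EuclideanSpace ℝ (Fin n)

/-- Continuous linear operators on `ℝⁿ` (playing the role of `n × n` matrices). -/
abbrev EucOp (n : ℕ) := Euc n →L[ℝ] Euc n

variable {n : ℕ}

/-- The set of nearest points of `C` to `x` (the Euclidean projection `P_C(x)`). -/
def projSet (C : Set (Euc n)) (x : Euc n) : Set (Euc n) :=
  {c | c ∈ C ∧ dist x c = Metric.infDist x C}

/-- The (Bouligand) tangent cone to `C` at `x`, via sequences:
`v = lim (xk - x)/δk` with `xk ∈ C`, `xk → x`, `δk → 0⁺`. -/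
def tanCone (C : Set (Euc n)) (x : Euc n) : Set (Euc n) :=
  {v | ∃ (xk : ℕ → Euc n) (δk : ℕ → ℝ),
    (∀ k, xk k ∈ C) ∧ Filter.Tendsto xk Filter.atTop (nhds x) ∧
    (∀ k, 0 < δk k) ∧ Filter.Tendsto δk Filter.atTop (nhds 0) ∧
    Filter.Tendsto (fun k => (δk k)⁻¹ • (xk k - x)) Filter.atTop (nhds v)}

/-- Clarke regularity: sequential inner semicontinuity of the tangent-cone map on `C`. -/
def ClarkeRegular (C : Set (Euc n)) : Prop :=
  ∀ x ∈ C, ∀ v ∈ tanCone C x, ∀ xk : ℕ → Euc n,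
    (∀ k, xk k ∈ C) → Filter.Tendsto xk Filter.atTop (nhds x) →
    ∃ vk : ℕ → Euc n, (∀ k, vk k ∈ tanCone C (xk k)) ∧
      Filter.Tendsto vk Filter.atTop (nhds v)

/-- The Euclidean normal cone `N_xC`, the polar of the tangent cone. -/
def normalCone (C : Set (Euc n)) (x : Euc n) : Set (Euc n) :=
  {η | ∀ v ∈ tanCone C x, ⟪η, v⟫ ≤ 0}

/-- `C` is `α`-prox-regular at `x`: every normal vector at `x` is `α`-proximal. -/
def ProxRegularAt (C : Set (Euc n)) (α : ℝ) (x : Euc n) : Prop :=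
  ∀ η ∈ normalCone C x, ∀ y ∈ C, ⟪η, y - x⟫ ≤ α * ‖η‖ * ‖y - x‖ ^ 2

/-- `C` is `α`-prox-regular: Clarke regular and `α`-prox-regular at every point. -/
def ProxRegular (C : Set (Euc n)) (α : ℝ) : Prop :=
  ClarkeRegular C ∧ ∀ x ∈ C, ProxRegularAt C α x

/-- `G` is a (continuous) metric on `C`: continuous, symmetric, positive definite. -/
def IsMetricOn (C : Set (Euc n)) (G : Euc n → EucOp n) : Prop :=
  ContinuousOn G C ∧
    ∀ x ∈ C, (∀ u v : Euc n, ⟪G x u, v⟫ = ⟪u, G x v⟫) ∧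
      ∀ u : Euc n, u ≠ 0 → 0 < ⟪u, G x u⟫

/-- The inner product `⟨u, v⟩_{G(x)} := uᵀ G(x) v` induced by an operator `Gx`. -/
def innerG (Gx : EucOp n) (u v : Euc n) : ℝ := ⟪u, Gx v⟫

/-- The norm `‖u‖_{G(x)}` induced by an operator `Gx`. -/
def normG (Gx : EucOp n) (u : Euc n) : ℝ := Real.sqrt (innerG Gx u u)

/-- The `G`-normal cone `N^G_xC`. -/
def normalConeG (C : Set (Euc n)) (G : Euc n → EucOp n) (x : Euc n) : Set (Euc n) :=
  {η | ∀ v ∈ tanCone C x, innerG (G x) η v ≤ 0}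

/-- The projection `Π^G_C[w](x)`: minimizers of `‖v - w‖_{G(x)}` over the tangent cone. -/
def projTanG (C : Set (Euc n)) (G : Euc n → EucOp n) (w x : Euc n) : Set (Euc n) :=
  {v | v ∈ tanCone C x ∧ ∀ u ∈ tanCone C x, normG (G x) (v - w) ≤ normG (G x) (u - w)}

/-- The Euclidean projection onto the tangent cone, `Π_C[w](x)` (identity metric). -/
def projTanI (C : Set (Euc n)) (w x : Euc n) : Set (Euc n) :=
  {v | v ∈ tanCone C x ∧ ∀ u ∈ tanCone C x, ‖v - w‖ ≤ ‖u - w‖}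

/-- `z` is a Carathéodory solution of `ż ∈ H(z)`, `z ∈ C`, on `[0,T]`, with (a.e.)
derivative `v`: absolute continuity is encoded by the integral representation. -/
def SolutionVia (H : Euc n → Set (Euc n)) (C : Set (Euc n)) (T : ℝ)
    (z v : ℝ → Euc n) : Prop :=
  (∀ t ∈ Set.Icc (0:ℝ) T, z t ∈ C) ∧
  MeasureTheory.IntegrableOn v (Set.Icc (0:ℝ) T) ∧
  (∀ᵐ t ∂(MeasureTheory.volume.restrict (Set.Icc (0:ℝ) T)), v t ∈ H (z t)) ∧
  (∀ t ∈ Set.Icc (0:ℝ) T, z t = z 0 + ∫ s in (0:ℝ)..t, v s)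

/-- `z` is a Carathéodory solution of `ż ∈ H(z)`, `z ∈ C`, on `[0,T]`. -/
def IsSolutionOn (H : Euc n → Set (Euc n)) (C : Set (Euc n)) (T : ℝ)
    (z : ℝ → Euc n) : Prop :=
  ∃ v : ℝ → Euc n, SolutionVia H C T z v

/-- `z : [0,T'] → ℝⁿ` is a `(T, ε)`-truncated solution of `ż ∈ H(z)`, `z ∈ C`,
with initial condition `z₀`. -/
def IsTruncSol (H : Euc n → Set (Euc n)) (C : Set (Euc n)) (T ε : ℝ) (z₀ : Euc n)
    (T' : ℝ) (z : ℝ → Euc n) : Prop :=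
  0 ≤ T' ∧ T' ≤ T ∧ IsSolutionOn H C T' z ∧ z 0 = z₀ ∧
  (∀ t ∈ Set.Icc (0:ℝ) T', ‖z t - z₀‖ ≤ ε) ∧ (T' = T ∨ ‖z T' - z₀‖ = ε)

/-- A complete solution: a solution on every compact interval `[0,T]`. -/
def IsCompleteSol (H : Euc n → Set (Euc n)) (C : Set (Euc n)) (z : ℝ → Euc n) : Prop :=
  ∀ T : ℝ, 0 ≤ T → IsSolutionOn H C T z

/-- The graph of a map defined on `[0,T']`, as a subset of `ℝ × ℝⁿ`. -/
def graphOn (T' : ℝ) (z : ℝ → Euc n) : Set (ℝ × Euc n) :=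
  {p | p.1 ∈ Set.Icc (0:ℝ) T' ∧ p.2 = z p.1}

/-- Painlevé–Kuratowski convergence of a sequence of sets to `L`:
`L` is contained in the inner limit and contains the outer limit. -/
def KuratowskiTendsto {X : Type*} [TopologicalSpace X] (A : ℕ → Set X) (L : Set X) : Prop :=
  (∀ x ∈ L, ∀ U ∈ nhds x, ∀ᶠ i in Filter.atTop, (A i ∩ U).Nonempty) ∧
  (∀ x : X, (∀ U ∈ nhds x, ∃ᶠ i in Filter.atTop, (A i ∩ U).Nonempty) → x ∈ L)

/-- The enlarged set `Z°_α := Z + (1/(2α))·int 𝔹` on which the projection is single-valued. -/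
def ZballSet (Z : Set (Euc n)) (α : ℝ) : Set (Euc n) :=
  Z + Metric.ball (0 : Euc n) (1 / (2 * α))

/-- The anti-windup approximation vector field
`F_K(z) = f(z, P_Z(z)) − (1/K)·G⁻¹(P_Z(z))(z − P_Z(z))`, as a set-valued map. -/
def AWA (f : Euc n → Euc n → Euc n) (Ginv : Euc n → EucOp n) (Z : Set (Euc n)) (K : ℝ)
    (z : Euc n) : Set (Euc n) :=
  (fun zb => f z zb - K⁻¹ • Ginv zb (z - zb)) '' projSet Z z

/-- The special anti-windup vector field `F_K(z) = f(P_Z(z)) − (1/K)·G⁻¹(P_Z(z))(z − P_Z(z))`. -/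
def AWAspec (f : Euc n → Euc n) (Ginv : Euc n → EucOp n) (Z : Set (Euc n)) (K : ℝ)
    (z : Euc n) : Set (Euc n) :=
  (fun zb => f zb - K⁻¹ • Ginv zb (z - zb)) '' projSet Z z

/-- `Ginv` is a pointwise (two-sided) inverse of `G` on `Z`. -/
def InverseOn (G Ginv : Euc n → EucOp n) (Z : Set (Euc n)) : Prop :=
  ∀ x ∈ Z, (∀ u : Euc n, G x (Ginv x u) = u) ∧ (∀ u : Euc n, Ginv x (G x u) = u)

/-- A function of class `K∞` on `[0,∞)`. -/
def ClassKInf (ω : ℝ → ℝ) : Prop :=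
  ContinuousOn ω (Set.Ici (0:ℝ)) ∧ StrictMonoOn ω (Set.Ici (0:ℝ)) ∧
  (∀ M : ℝ, ∃ r : ℝ, 0 ≤ r ∧ M ≤ ω r) ∧ ω 0 = 0 ∧ ∀ r : ℝ, 0 ≤ r → 0 ≤ ω r

/-- A function of class `KL` on `[0,∞)²`. -/
def ClassKL (β : ℝ → ℝ → ℝ) : Prop :=
  (∀ r s : ℝ, 0 ≤ r → 0 ≤ s → 0 ≤ β r s) ∧
  (∀ s : ℝ, 0 ≤ s → MonotoneOn (fun r => β r s) (Set.Ici (0:ℝ))) ∧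
  (∀ r : ℝ, 0 ≤ r → AntitoneOn (β r) (Set.Ici (0:ℝ))) ∧
  (∀ s : ℝ, 0 ≤ s → Filter.Tendsto (fun r => β r s) (nhdsWithin 0 (Set.Ioi 0)) (nhds 0)) ∧
  (∀ r : ℝ, 0 ≤ r → Filter.Tendsto (β r) Filter.atTop (nhds 0))

/-- The local assumption (Assumption 3.3) at `z₀ ∈ Z` with constants `M, ν, μ, α, ε`. -/
def LocalAssumption (Z : Set (Euc n)) (f : Euc n → Euc n → Euc n) (Ginv : Euc n → EucOp n)
    (z₀ : Euc n) (M ν μ α ε : ℝ) : Prop :=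
  (0 < M ∧ 0 < ν ∧ 0 < μ ∧ 0 < α ∧ 0 < ε) ∧
  (∀ z ∈ Metric.closedBall z₀ ε ∩ ZballSet Z α, ∀ zb ∈ projSet Z z, ‖f z zb‖ ≤ M) ∧
  (∀ z ∈ Metric.closedBall z₀ ε ∩ ZballSet Z α, ∀ zb ∈ projSet Z z, ∀ u : Euc n,
    μ * ‖u‖ ^ 2 ≤ ⟪u, Ginv zb u⟫ ∧ ⟪u, Ginv zb u⟫ ≤ ν * ‖u‖ ^ 2) ∧
  (∀ x ∈ Metric.closedBall z₀ ε ∩ Z, ProxRegularAt Z α x)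

/-- The alternate-form vector field `F̂(z) = f(z, P_Z(z)) − N^G_zZ ∩ γ𝔹` (for `z ∈ Z`). -/
def FhatMap (f : Euc n → Euc n → Euc n) (G : Euc n → EucOp n) (Z : Set (Euc n)) (γ : ℝ)
    (z : Euc n) : Set (Euc n) :=
  (fun η => f z z - η) '' {η | η ∈ normalConeG Z G z ∧ ‖η‖ ≤ γ}

/-- The `σ`-perturbation `H_σ(x) := cl co H((x + σ𝔹) ∩ C) + σ𝔹` of a set-valued map. -/
def perturbMap (H : Euc n → Set (Euc n)) (C : Set (Euc n)) (σ : ℝ) (x : Euc n) :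
    Set (Euc n) :=
  closure (convexHull ℝ (⋃ y ∈ Metric.closedBall x σ ∩ C, H y)) +
    Metric.closedBall (0 : Euc n) σ

end

section Stmt2Aux

open MeasureTheory

variable {n : ℕ}

lemma zero_mem_tanCone {C : Set (Euc n)} {x : Euc n} (hx : x ∈ C) :
    (0 : Euc n) ∈ tanCone C x := by
  refine ⟨fun _ => x, fun k => ((k : ℝ) + 1)⁻¹, fun _ => hx, tendsto_const_nhds,
    fun k => by positivity, ?_, ?_⟩
  · simpa [one_div] using tendsto_one_div_add_atTop_nhds_zero_nat (𝕜 := ℝ)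
  · simpa using (tendsto_const_nhds : Filter.Tendsto (fun _ : ℕ => (0 : Euc n)) Filter.atTop _)

lemma smul_mem_tanCone {C : Set (Euc n)} {x v : Euc n} (hv : v ∈ tanCone C x)
    {c : ℝ} (hc : 0 < c) : c • v ∈ tanCone C x := by
  obtain ⟨xk, δk, hmem, hxk, hδpos, hδ0, hlim⟩ := hv
  refine ⟨xk, fun k => δk k / c, hmem, hxk, fun k => div_pos (hδpos k) hc,
    by simpa using hδ0.div_const c, ?_⟩
  have he : (fun k => (δk k / c)⁻¹ • (xk k - x)) = fun k => c • ((δk k)⁻¹ • (xk k - x)) := by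
    funext k
    rw [div_eq_mul_inv, mul_inv, inv_inv, mul_comm, mul_smul]
  rw [he]
  exact hlim.const_smul c

lemma mem_tanCone_of_approx {C : Set (Euc n)} {x u : Euc n}
    (h : ∀ ε : ℝ, 0 < ε → ∃ τ : ℝ, 0 < τ ∧ τ < ε ∧ ∃ y ∈ C, ‖(τ⁻¹ : ℝ) • (y - x) - u‖ ≤ ε) :
    u ∈ tanCone C x := by
  choose τ hτ0 hτε y hyC hy using fun k : ℕ => h (((k : ℝ) + 1)⁻¹) (by positivity)
  have hτlim : Filter.Tendsto τ Filter.atTop (nhds 0) := by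
    refine squeeze_zero (fun k => (hτ0 k).le) (fun k => (hτε k).le) ?_
    simpa [one_div] using tendsto_one_div_add_atTop_nhds_zero_nat (𝕜 := ℝ)
  have hqlim : Filter.Tendsto (fun k => (τ k)⁻¹ • (y k - x)) Filter.atTop (nhds u) := by
    rw [← tendsto_sub_nhds_zero_iff]
    refine squeeze_zero_norm (fun k => hy k) ?_
    simpa [one_div] using tendsto_one_div_add_atTop_nhds_zero_nat (𝕜 := ℝ)
  have hylim : Filter.Tendsto y Filter.atTop (nhds x) := by
    have : Filter.Tendsto (fun k => τ k • ((τ k)⁻¹ • (y k - x))) Filter.atTop (nhds ((0:ℝ) • u)) :=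
      hτlim.smul hqlim
    simp only [zero_smul] at this
    have he : (fun k => τ k • ((τ k)⁻¹ • (y k - x))) = fun k => y k - x := by
      funext k; rw [smul_inv_smul₀ (ne_of_gt (hτ0 k))]
    rw [he] at this
    have := this.add_const x
    simpa using this
  exact ⟨y, τ, hyC, hylim, hτ0, hτlim, hqlim⟩

lemma uniform_isc {C : Set (Euc n)} (hreg : ClarkeRegular C) {x w : Euc n}
    (hx : x ∈ C) (hw : w ∈ tanCone C x) {ε : ℝ} (hε : 0 < ε) :
    ∃ δ > 0, ∀ p ∈ C, ‖p - x‖ < δ → ∃ w' ∈ tanCone C p, ‖w' - w‖ ≤ ε := by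
  by_contra hcon
  push_neg at hcon
  choose p hpC hpx hfar using fun k : ℕ => hcon (((k : ℝ) + 1)⁻¹) (by positivity)
  have hplim : Filter.Tendsto p Filter.atTop (nhds x) := by
    rw [tendsto_iff_norm_sub_tendsto_zero]
    refine squeeze_zero (fun k => norm_nonneg _) (fun k => (hpx k).le) ?_
    simpa [one_div] using tendsto_one_div_add_atTop_nhds_zero_nat (𝕜 := ℝ)
  obtain ⟨vk, hvkT, hvklim⟩ := hreg x hx w hw p hpC hplim
  have : ∀ᶠ k in Filter.atTop, ‖vk k - w‖ < ε := by
    have := (tendsto_iff_norm_sub_tendsto_zero.mp hvklim)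
    exact this.eventually_lt_const hε
  obtain ⟨k, hk⟩ := this.exists
  exact absurd hk (not_lt.mpr (hfar k (vk k) (hvkT k)).le)

end Stmt2Aux

section Stmt2Aux2

open MeasureTheory

variable {n : ℕ}

lemma chain_lemma {C : Set (Euc n)} (hC : IsClosed C) {x w : Euc n} {ε δ : ℝ} (hε : 0 < ε)
    (H : ∀ p ∈ C, ‖p - x‖ < δ → ∃ w' ∈ tanCone C p, ‖w' - w‖ ≤ ε)
    {p : Euc n} (hp : p ∈ C) {t : ℝ} (ht : 0 < t)
    (hbud : ‖p - x‖ + t * (‖w‖ + 2 * ε) < δ) :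
    ∃ q ∈ C, ‖q - (p + t • w)‖ ≤ 2 * ε * t := by
  set S : Set ℝ := {s | s ∈ Set.Icc 0 t ∧ ∃ q ∈ C, ‖q - (p + s • w)‖ ≤ 2 * ε * s} with hS
  have hS0 : (0 : ℝ) ∈ S := ⟨⟨le_refl 0, ht.le⟩, p, hp, by simp⟩
  have hbdd : BddAbove S := ⟨t, fun s hs => hs.1.2⟩
  have hne : S.Nonempty := ⟨0, hS0⟩
  have hclosed : IsClosed S := by
    refine IsSeqClosed.isClosed ?_
    intro sj s hmem hlim
    have hIcc : s ∈ Set.Icc 0 t :=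
      isClosed_Icc.mem_of_tendsto hlim (Filter.Eventually.of_forall fun j => (hmem j).1)
    choose q hqC hq using fun j => (hmem j).2
    have hqbdd : ∀ j, q j ∈ Metric.closedBall (0 : Euc n) (‖p‖ + t * ‖w‖ + 2 * ε * t) := by
      intro j
      have h1 : ‖q j‖ ≤ ‖q j - (p + sj j • w)‖ + ‖p + sj j • w‖ := by
        simpa using norm_add_le (q j - (p + sj j • w)) (p + sj j • w)
      have h2 : ‖p + sj j • w‖ ≤ ‖p‖ + sj j * ‖w‖ := by
        calc ‖p + sj j • w‖ ≤ ‖p‖ + ‖sj j • w‖ := norm_add_le _ _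
        _ = ‖p‖ + sj j * ‖w‖ := by
              rw [norm_smul, Real.norm_eq_abs, abs_of_nonneg (hmem j).1.1]
      have h3 : sj j * ‖w‖ ≤ t * ‖w‖ := by
        exact mul_le_mul_of_nonneg_right (hmem j).1.2 (norm_nonneg _)
      have h4 : 2 * ε * sj j ≤ 2 * ε * t := by
        exact mul_le_mul_of_nonneg_left (hmem j).1.2 (by positivity)
      simp only [Metric.mem_closedBall, dist_zero_right]
      linarith [hq j]
    obtain ⟨a, -, φ, hφ, halim⟩ :=
      tendsto_subseq_of_bounded Metric.isBounded_closedBall hqbdd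
    have haC : a ∈ C := hC.mem_of_tendsto halim (Filter.Eventually.of_forall fun j => hqC (φ j))
    refine ⟨hIcc, a, haC, ?_⟩
    have hslim : Filter.Tendsto (fun j => sj (φ j)) Filter.atTop (nhds s) :=
      hlim.comp hφ.tendsto_atTop
    have hlhs : Filter.Tendsto (fun j => ‖q (φ j) - (p + sj (φ j) • w)‖) Filter.atTop
        (nhds ‖a - (p + s • w)‖) := by
      exact (halim.sub ((tendsto_const_nhds.add (hslim.smul tendsto_const_nhds)))).norm
    have hrhs : Filter.Tendsto (fun j => 2 * ε * sj (φ j)) Filter.atTop (nhds (2 * ε * s)) :=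
      hslim.const_mul _
    exact le_of_tendsto_of_tendsto' hlhs hrhs fun j => hq (φ j)
  set s₀ := sSup S with hs₀def
  have hs₀S : s₀ ∈ S := hclosed.csSup_mem hne hbdd
  obtain ⟨⟨hs₀0, hs₀t⟩, q, hqC, hq⟩ := hs₀S
  by_cases hlt : s₀ < t
  · exfalso
    have hqx : ‖q - x‖ < δ := by
      have h1 : ‖q - x‖ ≤ ‖q - (p + s₀ • w)‖ + ‖p + s₀ • w - x‖ := by
        simpa using norm_add_le (q - (p + s₀ • w)) (p + s₀ • w - x)
      have h2 : ‖p + s₀ • w - x‖ ≤ ‖p - x‖ + s₀ * ‖w‖ := by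
        calc ‖p + s₀ • w - x‖ = ‖(p - x) + s₀ • w‖ := by
              congr 1; abel
        _ ≤ ‖p - x‖ + ‖s₀ • w‖ := norm_add_le _ _
        _ = ‖p - x‖ + s₀ * ‖w‖ := by
              rw [norm_smul, Real.norm_eq_abs, abs_of_nonneg hs₀0]
      have h3 : s₀ * ‖w‖ ≤ t * ‖w‖ := mul_le_mul_of_nonneg_right hs₀t (norm_nonneg _)
      have h4 : 2 * ε * s₀ ≤ t * (2 * ε) := by
        calc 2 * ε * s₀ ≤ 2 * ε * t := mul_le_mul_of_nonneg_left hs₀t (by positivity)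
        _ = t * (2 * ε) := by ring
      nlinarith [norm_nonneg (p - x)]
    obtain ⟨w', hw'T, hw'w⟩ := H q hqC hqx
    obtain ⟨yj, τj, hymem, hytend, hτpos, hτ0, hquot⟩ := hw'T
    have hev1 : ∀ᶠ j in Filter.atTop, τj j < t - s₀ := hτ0.eventually_lt_const (by linarith)
    have hev2 : ∀ᶠ j in Filter.atTop, ‖(τj j)⁻¹ • (yj j - q) - w'‖ < ε := by
      have := tendsto_iff_norm_sub_tendsto_zero.mp hquot
      exact this.eventually_lt_const hε
    obtain ⟨j, hj1, hj2⟩ := (hev1.and hev2).exists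
    have hs'S : s₀ + τj j ∈ S := by
      refine ⟨⟨by linarith [(hτpos j), hs₀0], by linarith⟩, yj j, hymem j, ?_⟩
      have hkey : yj j - (p + (s₀ + τj j) • w) =
          (τj j) • ((τj j)⁻¹ • (yj j - q) - w) + (q - (p + s₀ • w)) := by
        rw [smul_sub, smul_inv_smul₀ (ne_of_gt (hτpos j))]
        module
      rw [hkey]
      have h5 : ‖(τj j) • ((τj j)⁻¹ • (yj j - q) - w)‖ ≤ τj j * (2 * ε) := by
        rw [norm_smul, Real.norm_eq_abs, abs_of_nonneg (hτpos j).le]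
        refine mul_le_mul_of_nonneg_left ?_ (hτpos j).le
        calc ‖(τj j)⁻¹ • (yj j - q) - w‖
            ≤ ‖(τj j)⁻¹ • (yj j - q) - w'‖ + ‖w' - w‖ := by
              simpa using norm_add_le ((τj j)⁻¹ • (yj j - q) - w') (w' - w)
        _ ≤ ε + ε := add_le_add hj2.le hw'w
        _ = 2 * ε := by ring
      calc ‖(τj j) • ((τj j)⁻¹ • (yj j - q) - w) + (q - (p + s₀ • w))‖
          ≤ ‖(τj j) • ((τj j)⁻¹ • (yj j - q) - w)‖ + ‖q - (p + s₀ • w)‖ := norm_add_le _ _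
      _ ≤ τj j * (2 * ε) + 2 * ε * s₀ := add_le_add h5 hq
      _ = 2 * ε * (s₀ + τj j) := by ring
    have := le_csSup hbdd hs'S
    linarith [hτpos j]
  · have : s₀ = t := le_antisymm hs₀t (not_lt.mp hlt)
    exact ⟨q, hqC, by rwa [this] at hq⟩

lemma add_mem_tanCone {C : Set (Euc n)} (hC : IsClosed C) (hreg : ClarkeRegular C)
    {x v w : Euc n} (hx : x ∈ C) (hv : v ∈ tanCone C x) (hw : w ∈ tanCone C x) :
    v + w ∈ tanCone C x := by
  refine mem_tanCone_of_approx fun ε hε => ?_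
  have hε3 : 0 < ε / 3 := by linarith
  obtain ⟨δ, hδ0, H⟩ := uniform_isc hreg hx hw hε3
  obtain ⟨xk, δk, hmem, hxtend, hδpos, hδ0', hquot⟩ := hv
  have hev1 : ∀ᶠ k in Filter.atTop, ‖xk k - x‖ < δ / 2 :=
    (tendsto_iff_norm_sub_tendsto_zero.mp hxtend).eventually_lt_const (by linarith)
  have hev2 : ∀ᶠ k in Filter.atTop, δk k * (‖w‖ + 2 * (ε / 3)) < δ / 2 :=
    (hδ0'.mul_const (‖w‖ + 2 * (ε / 3))).eventually_lt_const (by linarith)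
  have hev3 : ∀ᶠ k in Filter.atTop, δk k < ε := hδ0'.eventually_lt_const hε
  have hev4 : ∀ᶠ k in Filter.atTop, ‖(δk k)⁻¹ • (xk k - x) - v‖ < ε / 3 :=
    (tendsto_iff_norm_sub_tendsto_zero.mp hquot).eventually_lt_const hε3
  obtain ⟨k, hk⟩ := (hev1.and (hev2.and (hev3.and hev4))).exists
  obtain ⟨h1, h2, h3, h4⟩ := hk
  obtain ⟨q, hqC, hq⟩ := chain_lemma hC hε3 H (hmem k) (hδpos k) (by linarith)
  refine ⟨δk k, hδpos k, h3, q, hqC, ?_⟩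
  have hkey : (δk k)⁻¹ • (q - x) - (v + w) =
      (δk k)⁻¹ • (q - (xk k + δk k • w)) + ((δk k)⁻¹ • (xk k - x) - v) := by
    rw [smul_sub, smul_sub, smul_add, smul_smul, inv_mul_cancel₀ (ne_of_gt (hδpos k)), one_smul]
    module
  rw [hkey]
  have h5 : ‖(δk k)⁻¹ • (q - (xk k + δk k • w))‖ ≤ 2 * (ε / 3) := by
    rw [norm_smul, Real.norm_eq_abs, abs_of_nonneg (inv_nonneg.mpr (hδpos k).le)]
    rw [inv_mul_le_iff₀ (hδpos k)]
    calc ‖q - (xk k + δk k • w)‖ ≤ 2 * (ε / 3) * δk k := hq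
    _ = δk k * (2 * (ε / 3)) := by ring
  calc ‖(δk k)⁻¹ • (q - (xk k + δk k • w)) + ((δk k)⁻¹ • (xk k - x) - v)‖
      ≤ ‖(δk k)⁻¹ • (q - (xk k + δk k • w))‖ + ‖(δk k)⁻¹ • (xk k - x) - v‖ := norm_add_le _ _
  _ ≤ 2 * (ε / 3) + ε / 3 := add_le_add h5 h4.le
  _ = ε := by ring

end Stmt2Aux2

section Stmt2Aux3

open MeasureTheory

variable {n : ℕ}

lemma innerG_nonneg {Gx : EucOp n} (hpos : ∀ u : Euc n, u ≠ 0 → 0 < ⟪u, Gx u⟫)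
    (u : Euc n) : 0 ≤ innerG Gx u u := by
  rcases eq_or_ne u 0 with rfl | hu
  · simp [innerG]
  · exact (hpos u hu).le

lemma normG_sq {Gx : EucOp n} (hpos : ∀ u : Euc n, u ≠ 0 → 0 < ⟪u, Gx u⟫) (u : Euc n) :
    normG Gx u ^ 2 = innerG Gx u u :=
  Real.sq_sqrt (innerG_nonneg hpos u)

lemma normG_le_normG {Gx : EucOp n} {u v : Euc n}
    (h : innerG Gx u u ≤ innerG Gx v v) : normG Gx u ≤ normG Gx v :=
  Real.sqrt_le_sqrt h

lemma innerG_le_of_normG_le {Gx : EucOp n} (hpos : ∀ u : Euc n, u ≠ 0 → 0 < ⟪u, Gx u⟫)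
    {u v : Euc n} (h : normG Gx u ≤ normG Gx v) : innerG Gx u u ≤ innerG Gx v v := by
  rw [← normG_sq hpos, ← normG_sq hpos]
  exact pow_le_pow_left₀ (Real.sqrt_nonneg _) h 2

lemma innerG_expand (Gx : EucOp n) (a b : Euc n) :
    innerG Gx (a - b) (a - b) =
      innerG Gx a a - innerG Gx a b - innerG Gx b a + innerG Gx b b := by
  simp only [innerG, map_sub, inner_sub_left, inner_sub_right]
  ring

lemma innerG_add_smul (Gx : EucOp n) (a c : Euc n) (s : ℝ) :
    innerG Gx (a + s • c) (a + s • c) =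
      innerG Gx a a + s * innerG Gx a c + s * innerG Gx c a + s ^ 2 * innerG Gx c c := by
  simp only [innerG, map_add, _root_.map_smul, inner_add_left, inner_add_right,
    real_inner_smul_left, real_inner_smul_right]
  ring

lemma innerG_neg_neg (Gx : EucOp n) (a : Euc n) :
    innerG Gx (-a) (-a) = innerG Gx a a := by
  simp [innerG]

lemma innerG_symm {Gx : EucOp n} (hsym : ∀ u v : Euc n, ⟪Gx u, v⟫ = ⟪u, Gx v⟫)
    (a b : Euc n) : innerG Gx a b = innerG Gx b a := by
  rw [innerG, innerG, ← hsym, real_inner_comm]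

/-- The key variational inequality: if `v` minimizes `‖· - F‖_G` over the (convex, by
Clarke regularity) tangent cone, then `F - v` is `G`-normal. -/
lemma proj_is_normal {C : Set (Euc n)} (hC : IsClosed C) (hreg : ClarkeRegular C)
    {x : Euc n} (hx : x ∈ C) {Gx : EucOp n}
    (hsym : ∀ u v : Euc n, ⟪Gx u, v⟫ = ⟪u, Gx v⟫)
    (hpos : ∀ u : Euc n, u ≠ 0 → 0 < ⟪u, Gx u⟫)
    {F v : Euc n} (hvT : v ∈ tanCone C x)
    (hmin : ∀ u ∈ tanCone C x, normG Gx (v - F) ≤ normG Gx (u - F)) :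
    F - v ∈ normalConeG C (fun _ => Gx) x := by
  intro u huT
  have key : ∀ s : ℝ, 0 < s →
      0 ≤ 2 * s * innerG Gx (v - F) u + s ^ 2 * innerG Gx u u := by
    intro s hs
    have hmem : v + s • u ∈ tanCone C x :=
      add_mem_tanCone hC hreg hx hvT (smul_mem_tanCone huT hs)
    have h1 := innerG_le_of_normG_le hpos (hmin _ hmem)
    have h2 : v + s • u - F = (v - F) + s • u := by abel
    rw [h2, innerG_add_smul] at h1
    have h3 := innerG_symm hsym (v - F) u
    rw [← h3] at h1
    linarith
  have hA : 0 ≤ innerG Gx (v - F) u := by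
    by_contra hA
    push_neg at hA
    set A := innerG Gx (v - F) u with hAdef
    set B := innerG Gx u u with hBdef
    have hB : 0 ≤ B := innerG_nonneg hpos u
    have hs : 0 < -A / (B + 1) := div_pos (by linarith) (by linarith)
    have := key _ hs
    have hBB : -A / (B + 1) * B ≤ -A := by
      rw [div_mul_eq_mul_div, div_le_iff₀ (by linarith)]
      nlinarith
    nlinarith [sq_nonneg (-A / (B + 1))]
  have : innerG Gx (F - v) u = - innerG Gx (v - F) u := by
    simp only [innerG]
    have : F - v = -(v - F) := by abel
    rw [this, inner_neg_left]
  simp only [normalConeG, Set.mem_setOf_eq] at *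
  rw [this]
  linarith

end Stmt2Aux3

section Stmt2Aux4

open MeasureTheory

variable {n : ℕ}

lemma ae_deriv_tangent {C : Set (Euc n)} {T : ℝ} (hT : 0 < T) {z v : ℝ → Euc n}
    (hz : ∀ t ∈ Set.Icc (0:ℝ) T, z t ∈ C)
    (hint : MeasureTheory.IntegrableOn v (Set.Icc (0:ℝ) T))
    (hrep : ∀ t ∈ Set.Icc (0:ℝ) T, z t = z 0 + ∫ s in (0:ℝ)..t, v s) :
    ∀ᵐ t ∂(volume.restrict (Set.Icc (0:ℝ) T)),
      v t ∈ tanCone C (z t) ∧ -v t ∈ tanCone C (z t) := by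
  classical
  set V : ℝ → Euc n := (Set.Icc (0:ℝ) T).indicator v with hV
  have hVint : Integrable V := (integrable_indicator_iff measurableSet_Icc).mpr hint
  have hVloc : LocallyIntegrable V volume := hVint.locallyIntegrable
  have hleb := IsUnifLocDoublingMeasure.ae_tendsto_average_norm_sub (μ := volume) hVloc 1
  have hend : ∀ᵐ t ∂(volume : Measure ℝ), t ∉ ({0, T} : Set ℝ) := by
    rw [← measure_eq_zero_iff_ae_notMem, Set.insert_eq]
    exact measure_union_null Real.volume_singleton Real.volume_singleton
  have hII : ∀ a ∈ Set.Icc (0:ℝ) T, ∀ b ∈ Set.Icc (0:ℝ) T,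
      IntervalIntegrable v volume a b := by
    intro a ha b hb
    rw [intervalIntegrable_iff]
    refine hint.mono_set ?_
    intro s hs
    rw [Set.mem_uIoc] at hs
    rcases hs with hs | hs
    · exact ⟨le_trans ha.1 hs.1.le, le_trans hs.2 hb.2⟩
    · exact ⟨le_trans hb.1 hs.1.le, le_trans hs.2 ha.2⟩
  filter_upwards [ae_restrict_of_ae hleb, ae_restrict_of_ae hend,
    ae_restrict_mem measurableSet_Icc] with t hlebt htend htIcc
  simp only [Set.mem_insert_iff, Set.mem_singleton_iff, not_or] at htend
  have ht0 : 0 < t := lt_of_le_of_ne htIcc.1 (Ne.symm htend.1)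
  have htT : t < T := lt_of_le_of_ne htIcc.2 htend.2
  have hVt : V t = v t := Set.indicator_of_mem htIcc v
  have hlebt' : Filter.Tendsto (fun r => ⨍ y in Metric.closedBall t r, ‖V y - V t‖)
      (nhdsWithin 0 (Set.Ioi 0)) (nhds 0) := by
    refine hlebt (fun _ => t) id Filter.tendsto_id ?_
    filter_upwards [self_mem_nhdsWithin] with r hr
    exact Metric.mem_closedBall_self (by simp only [one_mul]; exact (Set.mem_Ioi.mp hr).le)
  set φ : ℝ → ℝ := fun r => 2 * ⨍ y in Metric.closedBall t r, ‖V y - V t‖ with hφdef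
  have hφ : Filter.Tendsto φ (nhdsWithin 0 (Set.Ioi 0)) (nhds 0) := by
    simpa using hlebt'.const_mul 2
  have havg : ∀ r : ℝ, 0 < r →
      ∫ y in Metric.closedBall t r, ‖V y - V t‖ = r * φ r := by
    intro r hr
    rw [hφdef]
    simp only
    rw [setAverage_eq, Real.volume_real_closedBall (by linarith),
      smul_eq_mul]
    field_simp
  have key : ∀ a b r : ℝ, a ∈ Set.Icc (0:ℝ) T → b ∈ Set.Icc (0:ℝ) T → a ≤ b → 0 < r →
      Set.Ioc a b ⊆ Metric.closedBall t r →
      ‖(∫ s in a..b, v s) - (b - a) • v t‖ ≤ r * φ r := by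
    intro a b r ha hb hab hr hsub
    have hi1 : IntervalIntegrable v volume a b := hII a ha b hb
    have hi2 : IntervalIntegrable (fun _ => v t) volume a b := intervalIntegrable_const
    have e1 : (∫ s in a..b, v s) - (b - a) • v t = ∫ s in a..b, (v s - v t) := by
      rw [intervalIntegral.integral_sub hi1 hi2, intervalIntegral.integral_const]
    have e2 : (∫ s in a..b, (v s - v t)) = ∫ s in Set.Ioc a b, (v s - v t) :=
      intervalIntegral.integral_of_le hab
    have hIocIcc : Set.Ioc a b ⊆ Set.Icc (0:ℝ) T := fun s hs =>
      ⟨le_trans ha.1 hs.1.le, le_trans hs.2 hb.2⟩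
    have hgint : IntegrableOn (fun y => ‖V y - V t‖) (Metric.closedBall t r) :=
      (hVint.integrableOn.sub
        (integrableOn_const measure_closedBall_lt_top.ne)).norm
    calc ‖(∫ s in a..b, v s) - (b - a) • v t‖
        = ‖∫ s in Set.Ioc a b, (v s - v t)‖ := by rw [e1, e2]
      _ ≤ ∫ s in Set.Ioc a b, ‖v s - v t‖ := norm_integral_le_integral_norm _
      _ = ∫ s in Set.Ioc a b, ‖V s - V t‖ := by
          refine setIntegral_congr_fun measurableSet_Ioc fun s hs => ?_
          rw [hV]
          rw [Set.indicator_of_mem (hIocIcc hs) v, Set.indicator_of_mem htIcc v]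
      _ ≤ ∫ y in Metric.closedBall t r, ‖V y - V t‖ :=
          setIntegral_mono_set hgint
            (Filter.Eventually.of_forall fun y => norm_nonneg _)
            (HasSubset.Subset.eventuallyLE hsub)
      _ = r * φ r := havg r hr
  have hτid : Filter.Tendsto (fun τ : ℝ => τ) (nhdsWithin 0 (Set.Ioi 0)) (nhds 0) :=
    Filter.tendsto_id.mono_left nhdsWithin_le_nhds
  constructor
  · refine mem_tanCone_of_approx fun ε hε => ?_
    have hev : ∀ᶠ τ in nhdsWithin 0 (Set.Ioi (0:ℝ)),
        (τ < min ε (T - t) ∧ φ τ < ε) ∧ τ ∈ Set.Ioi (0:ℝ) :=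
      ((hτid.eventually_lt_const (lt_min hε (by linarith))).and
        (hφ.eventually_lt_const hε)).and self_mem_nhdsWithin
    obtain ⟨τ, ⟨hτm, hτφ⟩, hτ0⟩ := hev.exists
    rw [Set.mem_Ioi] at hτ0
    have hτε : τ < ε := lt_of_lt_of_le hτm (min_le_left _ _)
    have hτT : t + τ ≤ T := by
      have := lt_of_lt_of_le hτm (min_le_right _ _); linarith
    have htτIcc : t + τ ∈ Set.Icc (0:ℝ) T := ⟨by linarith, hτT⟩
    refine ⟨τ, hτ0, hτε, z (t + τ), hz _ htτIcc, ?_⟩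
    have hdiff : z (t + τ) - z t = ∫ s in t..(t+τ), v s := by
      rw [hrep (t+τ) htτIcc, hrep t htIcc]
      have hadd : (∫ s in (0:ℝ)..t, v s) + ∫ s in t..(t+τ), v s
          = ∫ s in (0:ℝ)..(t+τ), v s :=
        intervalIntegral.integral_add_adjacent_intervals
          (hII 0 (Set.left_mem_Icc.mpr hT.le) t htIcc) (hII t htIcc (t+τ) htτIcc)
      rw [← hadd]; abel
    have hsub : Set.Ioc t (t+τ) ⊆ Metric.closedBall t τ := by
      intro s hs
      rw [Real.closedBall_eq_Icc]
      exact ⟨by linarith [hs.1], hs.2⟩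
    have hb := key t (t+τ) τ htIcc htτIcc (by linarith) hτ0 hsub
    have e3 : (τ:ℝ)⁻¹ • (z (t + τ) - z t) - v t
        = τ⁻¹ • ((z (t + τ) - z t) - (t + τ - t) • v t) := by
      simp only [smul_sub, smul_smul]
      have h9 : τ⁻¹ * (t + τ - t) = 1 := by field_simp; ring
      rw [h9, one_smul]
    rw [e3, hdiff, norm_smul, Real.norm_eq_abs, abs_of_nonneg (inv_nonneg.mpr hτ0.le)]
    calc τ⁻¹ * ‖(∫ s in t..(t+τ), v s) - (t + τ - t) • v t‖
        ≤ τ⁻¹ * (τ * φ τ) := by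
          refine mul_le_mul_of_nonneg_left ?_ (inv_nonneg.mpr hτ0.le)
          simpa using hb
      _ = φ τ := by field_simp
      _ ≤ ε := hτφ.le
  · refine mem_tanCone_of_approx fun ε hε => ?_
    have hev : ∀ᶠ τ in nhdsWithin 0 (Set.Ioi (0:ℝ)),
        (τ < min ε t ∧ φ τ < ε) ∧ τ ∈ Set.Ioi (0:ℝ) :=
      ((hτid.eventually_lt_const (lt_min hε ht0)).and
        (hφ.eventually_lt_const hε)).and self_mem_nhdsWithin
    obtain ⟨τ, ⟨hτm, hτφ⟩, hτ0⟩ := hev.exists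
    rw [Set.mem_Ioi] at hτ0
    have hτε : τ < ε := lt_of_lt_of_le hτm (min_le_left _ _)
    have hτt : τ < t := lt_of_lt_of_le hτm (min_le_right _ _)
    have htτIcc : t - τ ∈ Set.Icc (0:ℝ) T := ⟨by linarith, by linarith⟩
    refine ⟨τ, hτ0, hτε, z (t - τ), hz _ htτIcc, ?_⟩
    have hdiff : z t - z (t - τ) = ∫ s in (t-τ)..t, v s := by
      rw [hrep (t-τ) htτIcc, hrep t htIcc]
      have hadd : (∫ s in (0:ℝ)..(t-τ), v s) + ∫ s in (t-τ)..t, v s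
          = ∫ s in (0:ℝ)..t, v s :=
        intervalIntegral.integral_add_adjacent_intervals
          (hII 0 (Set.left_mem_Icc.mpr hT.le) (t-τ) htτIcc) (hII (t-τ) htτIcc t htIcc)
      rw [← hadd]; abel
    have hsub : Set.Ioc (t-τ) t ⊆ Metric.closedBall t τ := by
      intro s hs
      rw [Real.closedBall_eq_Icc]
      exact ⟨hs.1.le, by linarith [hs.2]⟩
    have hb := key (t-τ) t τ htτIcc htIcc (by linarith) hτ0 hsub
    have e3 : (τ:ℝ)⁻¹ • (z (t - τ) - z t) - (-v t)
        = -(τ⁻¹ • ((z t - z (t - τ)) - (t - (t - τ)) • v t)) := by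
      simp only [smul_sub, smul_smul]
      have h9 : τ⁻¹ * (t - (t - τ)) = 1 := by field_simp; ring
      rw [h9, one_smul]
      abel
    rw [e3, hdiff, norm_neg, norm_smul, Real.norm_eq_abs, abs_of_nonneg (inv_nonneg.mpr hτ0.le)]
    calc τ⁻¹ * ‖(∫ s in (t-τ)..t, v s) - (t - (t - τ)) • v t‖
        ≤ τ⁻¹ * (τ * φ τ) := by
          refine mul_le_mul_of_nonneg_left ?_ (inv_nonneg.mpr hτ0.le)
          simpa using hb
      _ = φ τ := by field_simp
      _ ≤ ε := hτφ.le

end Stmt2Aux4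

/-- cf. Prop. 2.7: equivalence of Carathéodory solutions of the projected
dynamical system and of the differential inclusion with `γ`-truncated `G`-normal cone. -/
theorem stmt2 {n : ℕ} (C : Set (Euc n)) (hC : IsClosed C) (hreg : ClarkeRegular C)
    (G : Euc n → EucOp n) (hG : IsMetricOn C G) (f : Euc n → Euc n) (γ : ℝ)
    (hγ : ∀ x ∈ C, normG (G x) (f x) ≤ γ) :
    ∀ T : ℝ, 0 < T → ∀ z : ℝ → Euc n,
      IsSolutionOn (fun x => projTanG C G (f x) x) C T z ↔
      IsSolutionOn
        (fun x => (fun η => f x - η) ''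
          {η | η ∈ normalConeG C G x ∧ normG (G x) η ≤ γ}) C T z := by
  intro T hT z
  constructor
  · rintro ⟨v, hz, hint, hae, hrep⟩
    refine ⟨v, hz, hint, ?_, hrep⟩
    filter_upwards [hae, MeasureTheory.ae_restrict_mem measurableSet_Icc] with t hv htIcc
    have hx : z t ∈ C := hz t htIcc
    obtain ⟨hsym, hpos⟩ := hG.2 (z t) hx
    obtain ⟨hvT, hmin⟩ := hv
    refine ⟨f (z t) - v t, ⟨?_, ?_⟩, sub_sub_cancel _ _⟩
    · intro u hu
      exact proj_is_normal hC hreg hx hsym hpos hvT hmin u hu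
    · have h0 := hmin 0 (zero_mem_tanCone hx)
      have e1 : innerG (G (z t)) (f (z t) - v t) (f (z t) - v t)
          = innerG (G (z t)) (v t - f (z t)) (v t - f (z t)) := by
        have e : f (z t) - v t = -(v t - f (z t)) := by abel
        rw [e, innerG_neg_neg]
      have e2 : innerG (G (z t)) ((0:Euc n) - f (z t)) ((0:Euc n) - f (z t))
          = innerG (G (z t)) (f (z t)) (f (z t)) := by
        have e : (0:Euc n) - f (z t) = -(f (z t)) := by abel
        rw [e, innerG_neg_neg]
      have h1 : normG (G (z t)) (f (z t) - v t) ≤ normG (G (z t)) (f (z t)) :=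
        le_trans (normG_le_normG (le_of_eq e1))
          (le_trans h0 (normG_le_normG (le_of_eq e2)))
      exact h1.trans (hγ _ hx)
  · rintro ⟨v, hz, hint, hae, hrep⟩
    refine ⟨v, hz, hint, ?_, hrep⟩
    filter_upwards [hae, MeasureTheory.ae_restrict_mem measurableSet_Icc,
      ae_deriv_tangent hT hz hint hrep] with t hv htIcc htan
    obtain ⟨htanp, htanm⟩ := htan
    have hx : z t ∈ C := hz t htIcc
    obtain ⟨hsym, hpos⟩ := hG.2 (z t) hx
    obtain ⟨η, ⟨hηN, hηγ⟩, hηv⟩ := hv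
    refine ⟨htanp, ?_⟩
    intro u huT
    have hη : η = f (z t) - v t := by rw [← hηv]; exact (sub_sub_cancel _ _).symm
    have h6 := hηN (-(v t)) htanm
    have e6 : innerG (G (z t)) η (-(v t)) = - innerG (G (z t)) η (v t) := by
      simp [innerG]
    rw [e6] at h6
    have hη1 : 0 ≤ innerG (G (z t)) η (v t) := by linarith
    have hη2 : innerG (G (z t)) η u ≤ 0 := hηN u huT
    have h3 : innerG (G (z t)) η (u - v t) ≤ 0 := by
      have e : innerG (G (z t)) η (u - v t)
          = innerG (G (z t)) η u - innerG (G (z t)) η (v t) := by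
        simp [innerG, map_sub, inner_sub_right]
      rw [e]; linarith
    have h4 := innerG_symm hsym (u - v t) η
    have h5 := innerG_nonneg hpos (u - v t)
    have e1 : v t - f (z t) = -η := by rw [hη]; abel
    have e2 : u - f (z t) = (u - v t) - η := by rw [hη]; abel
    refine normG_le_normG ?_
    rw [e1, e2, innerG_neg_neg, innerG_expand]
    linarith
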